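/- Let a ∈ ℝⁿ \ {0}, b_m < b_M be reals, γ > 0, μ > 0, and let B(u) = −ln(b_M − aᵀu) − ln(aᵀu − b_m) if b_m < aᵀu < b_M and B(u) = +∞ otherwise. Then for every x ∈ ℝⁿ, the unique minimizer over u ∈ ℝⁿ of (1/2)‖x − u‖² + γμ B(u) is φ(x, μ, γ) = x + ((κ(x, μ, γ) − aᵀx)/‖a‖²) a, where κ(x, μ, γ) is the unique solution in (b_m, b_M) of the cubic equation z³ − (b_m + b_M + aᵀx) z² + (b_m b_M + aᵀx (b_m + b_M) − 2γμ‖a‖²) z − b_m b_M aᵀx + γμ (b_m + b_M)‖a‖² = 0. -/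

import Mathlib

open scoped InnerProductSpace

/-- Logarithmic barrier of the hyperslab `{u : bm ≤ ⟪a,u⟫ ≤ bM}`. -/
noncomputable def hyperslabBarrier {n : ℕ} (a : EuclideanSpace ℝ (Fin n)) (bm bM : ℝ)
    (u : EuclideanSpace ℝ (Fin n)) : EReal :=
  if bm < ⟪a, u⟫_ℝ ∧ ⟪a, u⟫_ℝ < bM then
    ((- Real.log (bM - ⟪a, u⟫_ℝ) - Real.log (⟪a, u⟫_ℝ - bm) : ℝ) : EReal)
  else ⊤

/-- The objective `u ↦ (1/2)‖x-u‖² + γμ B(u)` defining `prox_{γμB}(x)`. -/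
noncomputable def hyperslabProxObj {n : ℕ} (a : EuclideanSpace ℝ (Fin n)) (bm bM γ μ : ℝ)
    (x u : EuclideanSpace ℝ (Fin n)) : EReal :=
  ((1 / 2 * ‖x - u‖ ^ 2 : ℝ) : EReal) + ((γ * μ : ℝ) : EReal) * hyperslabBarrier a bm bM u

open Real

lemma scalar_key' (bm bM t z s N c : ℝ)
    (hz1 : bm < z) (hz2 : z < bM) (hs1 : bm < s) (hs2 : s < bM)
    (hN : 0 < N) (hc : 0 < c) (hsz : s ≠ z)
    (hE : (z - t) * (bM - z) * (z - bm) + c * N * ((z - bm) - (bM - z)) = 0) :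
    1 / 2 * ((z - t) ^ 2 / N) + c * (-log (bM - z) - log (z - bm)) <
      1 / 2 * ((s - t) ^ 2 / N) + c * (-log (bM - s) - log (s - bm)) := by
  set p := bM - z with hp_def
  set q := z - bm with hq_def
  have hp : 0 < p := by simp [hp_def]; linarith
  have hq : 0 < q := by simp [hq_def]; linarith
  have hps : 0 < bM - s := by linarith
  have hqs : 0 < s - bm := by linarith
  -- first log bound
  have hr1 : (bM - s) / p ≠ 1 := by
    intro h
    rw [div_eq_one_iff_eq hp.ne'] at h
    apply hsz; linarith
  have hL1' := Real.log_lt_sub_one_of_pos (div_pos hps hp) hr1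
  rw [Real.log_div hps.ne' hp.ne'] at hL1'
  -- hL1' : log (bM - s) - log p < (bM - s) / p - 1
  have hL1 : p * (log (bM - s) - log p) < z - s := by
    have h2 : (bM - s) / p - 1 = (z - s) / p := by field_simp; ring
    rw [h2] at hL1'
    calc p * (log (bM - s) - log p) < p * ((z - s) / p) :=
          (mul_lt_mul_iff_right₀ hp).2 hL1'
      _ = z - s := by field_simp
  -- second log bound
  have hr2 : (s - bm) / q ≠ 1 := by
    intro h
    rw [div_eq_one_iff_eq hq.ne'] at h
    apply hsz; linarith
  have hL2' := Real.log_lt_sub_one_of_pos (div_pos hqs hq) hr2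
  rw [Real.log_div hqs.ne' hq.ne'] at hL2'
  have hL2 : q * (log (s - bm) - log q) < s - z := by
    have h2 : (s - bm) / q - 1 = (s - z) / q := by field_simp; ring
    rw [h2] at hL2'
    calc q * (log (s - bm) - log q) < q * ((s - z) / q) :=
          (mul_lt_mul_iff_right₀ hq).2 hL2'
      _ = s - z := by field_simp
  rw [← sub_pos]
  set D := 1 / 2 * ((s - t) ^ 2 / N) + c * (-log (bM - s) - log (s - bm)) -
      (1 / 2 * ((z - t) ^ 2 / N) + c * (-log (bM - z) - log (z - bm))) with hD_def
  have expand : 2 * N * p * q * D =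
      p * q * ((s - t) ^ 2 - (z - t) ^ 2)
        - 2 * N * c * q * (p * (log (bM - s) - log p))
        - 2 * N * c * p * (q * (log (s - bm) - log q)) := by
    rw [hD_def]; field_simp; ring
  have h3 : ((z - t) * p * q + c * N * (q - p)) * (s - z) = 0 := by
    rw [hE]; ring
  have hsz2 : 0 < (s - z) ^ 2 := pow_two_pos_of_ne_zero (sub_ne_zero.mpr hsz)
  have key : 0 < 2 * N * p * q * D := by
    rw [expand]
    nlinarith [mul_lt_mul_of_pos_left hL1 (by positivity : (0:ℝ) < 2 * N * c * q),
      mul_lt_mul_of_pos_left hL2 (by positivity : (0:ℝ) < 2 * N * c * p),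
      mul_pos (mul_pos hp hq) hsz2, h3]
  nlinarith [key, mul_pos (mul_pos (mul_pos (by linarith : (0:ℝ) < 2) hN) hp) hq]

theorem hyperslab_barrier_prox {n : ℕ} (a : EuclideanSpace ℝ (Fin n)) (ha : a ≠ 0)
    (bm bM : ℝ) (hb : bm < bM) (γ μ : ℝ) (hγ : 0 < γ) (hμ : 0 < μ)
    (κ : EuclideanSpace ℝ (Fin n) → ℝ)
    (hκ : ∀ x : EuclideanSpace ℝ (Fin n), κ x ∈ Set.Ioo bm bM ∧
      (κ x) ^ 3 - (bm + bM + ⟪a, x⟫_ℝ) * (κ x) ^ 2 +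
        (bm * bM + ⟪a, x⟫_ℝ * (bm + bM) - 2 * γ * μ * ‖a‖ ^ 2) * (κ x) -
        bm * bM * ⟪a, x⟫_ℝ + γ * μ * (bm + bM) * ‖a‖ ^ 2 = 0) :
    ∀ x u : EuclideanSpace ℝ (Fin n),
      u ≠ x + ((κ x - ⟪a, x⟫_ℝ) / ‖a‖ ^ 2) • a →
      hyperslabProxObj a bm bM γ μ x (x + ((κ x - ⟪a, x⟫_ℝ) / ‖a‖ ^ 2) • a)
        < hyperslabProxObj a bm bM γ μ x u := by
  intro x u hu
  obtain ⟨⟨hz1, hz2⟩, hcubic⟩ := hκ x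
  set t : ℝ := ⟪a, x⟫_ℝ with ht_def
  set z : ℝ := κ x with hz_def
  set N : ℝ := ‖a‖ ^ 2 with hN_def
  have hN : 0 < N := by
    have : 0 < ‖a‖ := norm_pos_iff.mpr ha
    positivity
  set c : ℝ := γ * μ with hc_def
  have hc : 0 < c := mul_pos hγ hμ
  set ustar : EuclideanSpace ℝ (Fin n) := x + ((z - t) / N) • a with hustar_def
  have hinner_a : ⟪a, a⟫_ℝ = N := real_inner_self_eq_norm_sq a
  have hsu : ⟪a, ustar⟫_ℝ = z := by
    rw [hustar_def, inner_add_right, real_inner_smul_right, hinner_a, ← ht_def]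
    field_simp
    ring
  have hxdiff : x - ustar = (-((z - t) / N)) • a := by
    rw [hustar_def]
    module
  have hnorm_star : ‖x - ustar‖ ^ 2 = (z - t) ^ 2 / N := by
    rw [hxdiff, norm_smul, Real.norm_eq_abs, mul_pow, sq_abs, ← hN_def]
    field_simp
  -- value at ustar
  have hval_star : hyperslabProxObj a bm bM γ μ x ustar =
      ((1 / 2 * ((z - t) ^ 2 / N) + c * (-log (bM - z) - log (z - bm)) : ℝ) : EReal) := by
    rw [hyperslabProxObj, hyperslabBarrier, hsu, if_pos ⟨hz1, hz2⟩, hnorm_star,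
      ← hc_def, ← EReal.coe_mul, ← EReal.coe_add]
  rw [hval_star]
  by_cases hin : bm < ⟪a, u⟫_ℝ ∧ ⟪a, u⟫_ℝ < bM
  · -- u in the slab
    set s : ℝ := ⟪a, u⟫_ℝ with hs_def
    obtain ⟨hs1, hs2⟩ := hin
    set w : EuclideanSpace ℝ (Fin n) := u - x - ((s - t) / N) • a with hw_def
    have hwinner : ⟪a, w⟫_ℝ = 0 := by
      rw [hw_def, inner_sub_right, inner_sub_right, real_inner_smul_right, hinner_a,
        ← ht_def, ← hs_def]
      field_simp
      ring
    have hxu : x - u = -(((s - t) / N) • a + w) := by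
      rw [hw_def]; module
    have hnorm_u : ‖x - u‖ ^ 2 = (s - t) ^ 2 / N + ‖w‖ ^ 2 := by
      rw [hxu, norm_neg, norm_add_sq_real, norm_smul, real_inner_smul_left, hwinner,
        Real.norm_eq_abs, mul_pow, sq_abs, ← hN_def]
      field_simp
      ring
    have hval_u : hyperslabProxObj a bm bM γ μ x u =
        ((1 / 2 * ((s - t) ^ 2 / N + ‖w‖ ^ 2) + c * (-log (bM - s) - log (s - bm)) : ℝ) : EReal) := by
      rw [hyperslabProxObj, hyperslabBarrier, ← hs_def, if_pos ⟨hs1, hs2⟩, hnorm_u,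
        ← hc_def, ← EReal.coe_mul, ← EReal.coe_add]
    rw [hval_u, EReal.coe_lt_coe_iff]
    by_cases hsz : s = z
    · -- then w ≠ 0
      have hw0 : w ≠ 0 := by
        intro h
        apply hu
        have h2 : u - (x + ((s - t) / N) • a) = w := by rw [hw_def]; module
        rw [h, sub_eq_zero] at h2
        rw [hustar_def, ← hsz]
        exact h2
      have hwpos : 0 < ‖w‖ ^ 2 := by
        have : 0 < ‖w‖ := norm_pos_iff.mpr hw0
        positivity
      rw [hsz]
      linarith
    · have hE : (z - t) * (bM - z) * (z - bm) + c * N * ((z - bm) - (bM - z)) = 0 := by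
        rw [hc_def, hN_def, ht_def, hz_def]
        linear_combination -hcubic
      have := scalar_key' bm bM t z s N c hz1 hz2 hs1 hs2 hN hc hsz hE
      have hwnn : 0 ≤ ‖w‖ ^ 2 := by positivity
      linarith
  · -- u outside: objective is ⊤
    have hval_u : hyperslabProxObj a bm bM γ μ x u = ⊤ := by
      rw [hyperslabProxObj, hyperslabBarrier, if_neg hin, ← hc_def,
        EReal.coe_mul_top_of_pos hc, EReal.coe_add_top]
    rw [hval_u]
    exact EReal.coe_lt_top _
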